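/- Let R be a commutative ring of prime characteristic p, let u ∈ R, and let J, A be ideals of R with u·J ⊆ J^[p] (where J^[p] denotes the ideal generated by p-th powers of elements of J). If R is regular (or more generally if Frobenius powers commute with colon ideals, i.e. (J^[p] : A^[p]) = (J : A)^[p]), then u·(J : A) ⊆ (J : A)^[p]. -/
import Mathlib


/-- The `q`-th Frobenius power of an ideal: the ideal generated by `q`-th powers of its
elements.  For `q = p^e` this is the usual bracket power `J^[p^e]`. -/
def fpow {R : Type*} [CommRing R] (q : ℕ) (J : Ideal R) : Ideal R :=
  Ideal.span ((fun a => a ^ q) '' (J : Set R))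

theorem stmt_0 {R : Type*} [CommRing R] (p : ℕ) (hp : p.Prime) [CharP R p]
    (u : R) (J A : Ideal R)
    (hu : ∀ x ∈ J, u * x ∈ fpow p J)
    (hcolon : (fpow p J).colon (fpow p A) = fpow p (J.colon A)) :
    ∀ x ∈ J.colon A, u * x ∈ fpow p (J.colon A) := by
  intro x hx
  rw [← hcolon]
  rw [Submodule.mem_colon]
  intro y hy
  refine Submodule.span_induction ?_ ?_ ?_ ?_ hy
  · rintro _ ⟨a, ha, rfl⟩
    have hxa : x * a ∈ J := by
      rw [Submodule.mem_colon] at hx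
      simpa [mul_comm] using hx a ha
    have := hu _ hxa
    have hps : p = (p - 1) + 1 := (Nat.succ_pred_eq_of_pos hp.pos).symm
    have : (u * (x * a)) * a ^ (p - 1) ∈ fpow p J := Ideal.mul_mem_right _ _ this
    have heq : (u * (x * a)) * a ^ (p - 1) = (u * x) * a ^ p := by
      conv_rhs => rw [hps]
      rw [pow_succ]; ring
    simpa [smul_eq_mul, heq] using this
  · simp
  · intro a b _ _ ha hb
    simpa [smul_eq_mul, mul_add] using add_mem ha hb
  · intro r a _ ha
    rw [smul_comm]
    exact Submodule.smul_mem _ _ ha
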